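/- Let r: X → ℝ be measurable with e^{−ε} ≤ r ≤ e^{ε} Q-a.e. for a probability measure Q, and ∫ r dQ = 1. Set A = {r ≥ 1}, q = Q(A), m₊ = E_Q[r | A], m₋ = E_Q[r | Aᶜ]. Then (1/2)∫|r − 1| dQ = q(m₊ − 1), and this quantity is maximized, subject to m₊ ∈ [1, e^ε], m₋ ∈ [e^{−ε}, 1], and q·m₊ + (1−q)·m₋ = 1, at m₊ = e^ε, m₋ = e^{−ε}, giving maximum value (e^ε − 1)/(e^ε + 1) = tanh(ε/2). -/

import Mathlib

open MeasureTheory Real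

theorem stmt_4 {X : Type*} [MeasurableSpace X] (Q : Measure X) [IsProbabilityMeasure Q]
    (r : X → ℝ) (hr : Measurable r) (ε : ℝ) (hε : 0 ≤ ε)
    (hbounds : ∀ᵐ x ∂Q, Real.exp (-ε) ≤ r x ∧ r x ≤ Real.exp ε)
    (hmean : ∫ x, r x ∂Q = 1)
    (A : Set X) (hA : A = {x | 1 ≤ r x})
    (q mplus mminus : ℝ)
    (hq : q = (Q A).toReal)
    (hmplus : mplus = (∫ x in A, r x ∂Q) / (Q A).toReal)
    (hmminus : mminus = (∫ x in Aᶜ, r x ∂Q) / (Q Aᶜ).toReal) :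
    (1 / 2) * ∫ x, |r x - 1| ∂Q = q * (mplus - 1) ∧
    (∀ q' mp mm : ℝ, 0 ≤ q' → q' ≤ 1 →
        1 ≤ mp → mp ≤ Real.exp ε →
        Real.exp (-ε) ≤ mm → mm ≤ 1 →
        q' * mp + (1 - q') * mm = 1 →
        q' * (mp - 1) ≤ (Real.exp ε - 1) / (Real.exp ε + 1)) ∧
    (1 / (Real.exp ε + 1)) * Real.exp ε +
        (1 - 1 / (Real.exp ε + 1)) * Real.exp (-ε) = 1 ∧
    (1 / (Real.exp ε + 1)) * (Real.exp ε - 1) = (Real.exp ε - 1) / (Real.exp ε + 1) ∧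
    (Real.exp ε - 1) / (Real.exp ε + 1) = Real.tanh (ε / 2) := by
  have hE1 : (1 : ℝ) ≤ Real.exp ε := by
    simpa using Real.exp_le_exp.mpr hε
  have hEpos : (0 : ℝ) < Real.exp ε + 1 := by linarith
  have hEF : Real.exp ε * Real.exp (-ε) = 1 := by
    rw [← Real.exp_add]; simp
  have hAmeas : MeasurableSet A := by
    rw [hA]; exact measurableSet_le measurable_const hr
  have hint : Integrable r Q := by
    refine Integrable.mono' (integrable_const (Real.exp ε)) hr.aestronglyMeasurable ?_
    filter_upwards [hbounds] with x ⟨h1, h2⟩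
    rw [Real.norm_eq_abs, abs_le]
    constructor
    · have : (0:ℝ) < Real.exp (-ε) := Real.exp_pos _
      linarith
    · exact h2
  have hint1 : Integrable (fun x => |r x - 1|) Q := (hint.sub (integrable_const 1)).abs
  -- split integrals over A and Aᶜ
  have hsplitr : (∫ x in A, r x ∂Q) + ∫ x in Aᶜ, r x ∂Q = 1 := by
    rw [integral_add_compl hAmeas hint, hmean]
  have hsplita : (∫ x in A, |r x - 1| ∂Q) + ∫ x in Aᶜ, |r x - 1| ∂Q
      = ∫ x, |r x - 1| ∂Q := integral_add_compl hAmeas hint1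
  have hQA : (Q A).toReal + (Q Aᶜ).toReal = 1 := by
    have := measure_add_measure_compl (μ := Q) hAmeas
    have h1 : Q A ≠ ⊤ := measure_ne_top _ _
    have h2 : Q Aᶜ ≠ ⊤ := measure_ne_top _ _
    rw [← ENNReal.toReal_add h1 h2, this]
    simp
  have hintA : Integrable r (Q.restrict A) := hint.restrict
  have hintAc : Integrable r (Q.restrict Aᶜ) := hint.restrict
  have hA1 : ∫ x in A, |r x - 1| ∂Q = (∫ x in A, r x ∂Q) - (Q A).toReal := by
    have : ∫ x in A, |r x - 1| ∂Q = ∫ x in A, (r x - 1) ∂Q := by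
      refine setIntegral_congr_fun hAmeas (fun x hx => ?_)
      rw [hA] at hx
      exact abs_of_nonneg (by simpa using hx)
    rw [this, integral_sub hintA (integrable_const 1), setIntegral_const]
    simp
    rfl
  have hA2 : ∫ x in Aᶜ, |r x - 1| ∂Q = (Q Aᶜ).toReal - ∫ x in Aᶜ, r x ∂Q := by
    have : ∫ x in Aᶜ, |r x - 1| ∂Q = ∫ x in Aᶜ, (1 - r x) ∂Q := by
      refine setIntegral_congr_fun hAmeas.compl (fun x hx => ?_)
      rw [hA] at hx
      simp only [Set.mem_compl_iff, Set.mem_setOf_eq, not_le] at hx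
      rw [abs_of_nonpos (by linarith)]; ring
    rw [this, integral_sub (integrable_const 1) hintAc, setIntegral_const]
    simp
    rfl
  have hRHS : q * (mplus - 1) = (∫ x in A, r x ∂Q) - (Q A).toReal := by
    rw [hq, hmplus]
    by_cases h0 : (Q A).toReal = 0
    · have : Q A = 0 := by
        have := measure_ne_top Q A
        simpa [ENNReal.toReal_eq_zero_iff, this] using h0
      rw [h0, Measure.restrict_eq_zero.mpr this]
      simp
    · field_simp
  refine ⟨?_, ?_, ?_, ?_, ?_⟩
  · rw [hRHS, ← hsplita, hA1, hA2]
    linarith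
  · intro q' mp mm hq0 hq1 hmp1 hmpE hmmF hmm1 hcon
    rw [le_div_iff₀ hEpos]
    have h1 : q' * (mp - 1) ≤ q' * (Real.exp ε - 1) :=
      mul_le_mul_of_nonneg_left (by linarith) hq0
    have h2 : q' * (mp - 1) = (1 - q') * (1 - mm) := by linarith
    have h3 : (1 - q') * (1 - mm) ≤ (1 - q') * (1 - Real.exp (-ε)) :=
      mul_le_mul_of_nonneg_left (by linarith) (by linarith)
    have h4 : Real.exp ε * ((1 - q') * (1 - Real.exp (-ε))) = (1 - q') * (Real.exp ε - 1) := by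
      nlinarith [hEF]
    nlinarith [mul_le_mul_of_nonneg_left h3 (Real.exp_pos ε).le]
  · field_simp
    nlinarith [hEF]
  · field_simp
  · rw [Real.tanh_eq_sinh_div_cosh, Real.sinh_eq, Real.cosh_eq]
    have ha : (0:ℝ) < Real.exp (ε/2) := Real.exp_pos _
    have h1 : Real.exp ε = Real.exp (ε/2) * Real.exp (ε/2) := by
      rw [← Real.exp_add]; ring_nf
    have h2 : Real.exp (-(ε/2)) = 1 / Real.exp (ε/2) := by
      rw [Real.exp_neg]; ring
    rw [h1, h2]
    have hd : Real.exp (ε/2) * Real.exp (ε/2) + 1 > 0 := by positivity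
    field_simp
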